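/- Let G be a finite connected simple undirected graph with normalized Laplacian eigenvalues 0 = λ_0 < λ_1 ≤ … ≤ λ_{n−1}, maximum degree Δ and minimum degree δ. Then the spectral (operator) norm of the Green's function 𝔾 of G satisfies ‖𝔾‖ ≤ (1/λ_1) √(Δ/δ). -/

import Mathlib

open Matrix
open scoped Matrix.Norms.L2Operator

lemma diagNormLe {n : Type*} [Fintype n] [DecidableEq n] (v : n → ℝ) (C : ℝ) (hC : 0 ≤ C)
    (h : ∀ i, |v i| ≤ C) : ‖(Matrix.diagonal v)‖ ≤ C := by
  rw [Matrix.l2_opNorm_def]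
  refine ContinuousLinearMap.opNorm_le_bound _ hC fun x => ?_
  show ‖Matrix.toEuclideanLin (Matrix.diagonal v) x‖ ≤ C * ‖x‖
  rw [EuclideanSpace.norm_eq, EuclideanSpace.norm_eq, ← Real.sqrt_sq hC,
    ← Real.sqrt_mul (sq_nonneg C)]
  apply Real.sqrt_le_sqrt
  rw [Finset.mul_sum]
  apply Finset.sum_le_sum
  intro i _
  have : (Matrix.toEuclideanLin (Matrix.diagonal v) x) i = v i * x i := by
    simp [Matrix.toEuclideanLin_apply, Matrix.mulVec_diagonal]
  rw [this]
  rw [Real.norm_eq_abs, Real.norm_eq_abs, abs_mul, mul_pow]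
  exact mul_le_mul_of_nonneg_right (pow_le_pow_left₀ (abs_nonneg _) (h i) 2) (sq_nonneg _)

lemma normOneLe {n : Type*} [Fintype n] [DecidableEq n] :
    ‖(1 : Matrix n n ℝ)‖ ≤ 1 := by
  rw [Matrix.cstar_norm_def, _root_.map_one]
  exact ContinuousLinearMap.norm_id_le

lemma orthNormLe {n : Type*} [Fintype n] [DecidableEq n] (Φ : Matrix n n ℝ)
    (h : Φᵀ * Φ = 1) : ‖Φ‖ ≤ 1 := by
  have h2 : ‖Φ‖ * ‖Φ‖ ≤ 1 := by
    rw [← Matrix.l2_opNorm_conjTranspose_mul_self]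
    have : Φᴴ = Φᵀ := rfl
    rw [this, h]
    exact normOneLe
  nlinarith [norm_nonneg (E := Matrix n n ℝ) Φ]

set_option maxHeartbeats 1000000 in

/-- For a finite connected simple graph `G` with normalized Laplacian
eigenvalues `0 = λ_0 < λ_1 ≤ … ≤ λ_{n−1}`, maximum degree `Δ` and minimum degree `δ`, the
spectral (operator) norm of the Green's function `𝔾` satisfies `‖𝔾‖ ≤ (1/λ_1) √(Δ/δ)`. -/
theorem green_opNorm_le
    (n : ℕ) [NeZero n] (hn : 2 ≤ n)
    (G : SimpleGraph (Fin n)) [DecidableRel G.Adj]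
    (hconn : G.Connected)
    -- eigenvalues and orthonormal eigenbasis of `𝓛 = I − D^{−1/2} A D^{−1/2}`
    (lam : Fin n → ℝ) (φ : Fin n → Fin n → ℝ)
    (heig : ∀ l, Matrix.mulVec
        (1 - (Matrix.diagonal fun i => (Real.sqrt (G.degree i))⁻¹) * G.adjMatrix ℝ
           * (Matrix.diagonal fun i => (Real.sqrt (G.degree i))⁻¹)) (φ l)
      = lam l • φ l)
    (horth : ∀ l m, (∑ i, φ l i * φ m i) = if l = m then (1 : ℝ) else 0)
    (hmono : Monotone lam) (hlam0 : lam 0 = 0) (hlam1 : 0 < lam 1)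
    -- the Green's function `𝔾` of `G`
    (𝔾 : Matrix (Fin n) (Fin n) ℝ)
    (hG1 : ∀ x y : Fin n,
      (𝔾 * (1 - (Matrix.diagonal fun i => ((G.degree i : ℝ))⁻¹) * G.adjMatrix ℝ)) x y
        = (if x = y then (1 : ℝ) else 0) - (G.degree y : ℝ) / ∑ i, (G.degree i : ℝ))
    (hG2 : ∀ x : Fin n, ∑ y, 𝔾 x y = 0) :
    ‖Matrix.toEuclideanCLM (𝕜 := ℝ) 𝔾‖
      ≤ (1 / lam 1) * Real.sqrt
          ((Finset.univ.sup' Finset.univ_nonempty (fun i => G.degree i) : ℝ)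
            / (Finset.univ.inf' Finset.univ_nonempty (fun i => G.degree i) : ℝ)) := by
  classical
  -- degrees
  set d : Fin n → ℝ := fun i => (G.degree i : ℝ) with hd
  have hdeg : ∀ i, 0 < G.degree i := by
    haveI : Nontrivial (Fin n) := Fin.nontrivial_iff_two_le.mpr hn
    intro i
    obtain ⟨j, hj⟩ := exists_ne i
    rw [G.degree_pos_iff_exists_adj]
    obtain ⟨w⟩ := hconn.preconnected i j
    cases w with
    | nil => exact absurd rfl hj.symm
    | cons h p => exact ⟨_, h⟩
  have hdpos : ∀ i, 0 < d i := fun i => Nat.cast_pos.mpr (hdeg i)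
  set sq : Fin n → ℝ := fun i => Real.sqrt (d i) with hsq
  have hsqpos : ∀ i, 0 < sq i := fun i => Real.sqrt_pos.mpr (hdpos i)
  have hsqsq : ∀ i, sq i * sq i = d i := fun i => Real.mul_self_sqrt (hdpos i).le
  set S : Matrix (Fin n) (Fin n) ℝ := Matrix.diagonal sq with hS
  set Sinv : Matrix (Fin n) (Fin n) ℝ := Matrix.diagonal (fun i => (sq i)⁻¹) with hSinv
  have hSS : S * Sinv = 1 := by
    rw [hS, hSinv, Matrix.diagonal_mul_diagonal]
    convert Matrix.diagonal_one
    exact mul_inv_cancel₀ (hsqpos _).ne'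
  have hSS' : Sinv * S = 1 := by
    rw [hS, hSinv, Matrix.diagonal_mul_diagonal]
    convert Matrix.diagonal_one
    exact inv_mul_cancel₀ (hsqpos _).ne'
  set A : Matrix (Fin n) (Fin n) ℝ := G.adjMatrix ℝ with hA
  set L : Matrix (Fin n) (Fin n) ℝ := 1 - Sinv * A * Sinv with hL
  have heig' : ∀ l, L.mulVec (φ l) = lam l • φ l := heig
  have hLsymm : Lᵀ = L := by
    rw [hL, Matrix.transpose_sub, Matrix.transpose_one, Matrix.transpose_mul,
      Matrix.transpose_mul, Matrix.diagonal_transpose, hA, G.transpose_adjMatrix]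
    rw [hSinv, Matrix.mul_assoc]
  -- eigenvector matrix
  set Φ : Matrix (Fin n) (Fin n) ℝ := Matrix.of φ with hΦ
  have hΦ1 : Φ * Φᵀ = 1 := by
    ext l m
    rw [Matrix.mul_apply]
    simpa [Matrix.one_apply, hΦ] using horth l m
  have hΦ2 : Φᵀ * Φ = 1 := mul_eq_one_comm.mp hΦ1
  have hLΦ : L * Φᵀ = Φᵀ * Matrix.diagonal lam := by
    ext i l
    rw [Matrix.mul_diagonal, Matrix.mul_apply]
    have := congrFun (heig' l) i
    rw [Matrix.mulVec, dotProduct] at this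
    simpa [hΦ, Matrix.transpose_apply, mul_comm] using this
  have hLdecomp : L = Φᵀ * Matrix.diagonal lam * Φ := by
    calc L = L * (Φᵀ * Φ) := by rw [hΦ2, Matrix.mul_one]
    _ = (L * Φᵀ) * Φ := by rw [Matrix.mul_assoc]
    _ = Φᵀ * Matrix.diagonal lam * Φ := by rw [hLΦ]
  -- the stationary vector
  set vol : ℝ := ∑ i, d i with hvol
  have hvolpos : 0 < vol := Finset.sum_pos (fun i _ => hdpos i) Finset.univ_nonempty
  set ψ : Fin n → ℝ := fun i => sq i / Real.sqrt vol with hψ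
  have hLψ : L.mulVec ψ = 0 := by
    funext i
    have h1 : Sinv.mulVec ψ = Function.const (Fin n) (Real.sqrt vol)⁻¹ := by
      funext j
      rw [hSinv, Matrix.mulVec_diagonal, hψ]
      simp only [Function.const]
      rw [div_eq_mul_inv, ← mul_assoc, inv_mul_cancel₀ (hsqpos j).ne', one_mul]
    have h2 : ((Sinv * A * Sinv).mulVec ψ) i = ψ i := by
      rw [Matrix.mul_assoc, ← Matrix.mulVec_mulVec, ← Matrix.mulVec_mulVec, h1]
      rw [hSinv, Matrix.mulVec_diagonal, hA, SimpleGraph.adjMatrix_mulVec_const_apply]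
      show (sq i)⁻¹ * (d i * (Real.sqrt vol)⁻¹) = sq i / Real.sqrt vol
      rw [← hsqsq i]
      field_simp
    rw [hL, Matrix.sub_mulVec, Matrix.one_mulVec]
    show ψ i - ((Sinv * A * Sinv).mulVec ψ) i = 0
    rw [h2, sub_self]
  have hψnorm : ∑ i, ψ i * ψ i = 1 := by
    have h1 : ∀ i, ψ i * ψ i = d i / vol := fun i => by
      rw [hψ, div_mul_div_comm, hsqsq, Real.mul_self_sqrt hvolpos.le]
    rw [Finset.sum_congr rfl (fun i _ => h1 i), ← Finset.sum_div, ← hvol,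
      div_self hvolpos.ne']
  set c : Fin n → ℝ := fun l => ∑ i, φ l i * ψ i with hc
  have hlamge : ∀ l : Fin n, l ≠ 0 → lam 1 ≤ lam l := by
    intro l hl
    apply hmono
    have h1 : (1 : Fin n).val = 1 := by
      rw [Fin.val_one', Nat.mod_eq_of_lt (by omega)]
    rw [Fin.le_def, h1]
    have h2 : l.val ≠ 0 := fun h => hl (Fin.ext h)
    omega
  have hlampos : ∀ l : Fin n, l ≠ 0 → 0 < lam l :=
    fun l hl => lt_of_lt_of_le hlam1 (hlamge l hl)
  have hc0 : ∀ l : Fin n, l ≠ 0 → c l = 0 := by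
    intro l hl
    have key : lam l * c l = 0 := by
      calc lam l * c l = ∑ i, (lam l • φ l) i * ψ i := by
            rw [hc, Finset.mul_sum]
            exact Finset.sum_congr rfl fun i _ => by simp [mul_assoc]
      _ = ∑ i, (L.mulVec (φ l)) i * ψ i := by rw [heig' l]
      _ = ∑ i, ∑ k, L i k * φ l k * ψ i := by
            refine Finset.sum_congr rfl fun i _ => ?_
            rw [Matrix.mulVec, dotProduct, Finset.sum_mul]
      _ = ∑ k, φ l k * ∑ i, L k i * ψ i := by
            rw [Finset.sum_comm]
            refine Finset.sum_congr rfl fun k _ => ?_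
            rw [Finset.mul_sum]
            refine Finset.sum_congr rfl fun i _ => ?_
            have hik : L i k = L k i := congrFun (congrFun hLsymm k) i
            rw [hik]; ring
      _ = ∑ k, φ l k * (L.mulVec ψ) k := by
            refine Finset.sum_congr rfl fun k _ => ?_
            rw [Matrix.mulVec, dotProduct]
      _ = 0 := by rw [hLψ]; simp
    rcases mul_eq_zero.mp key with h | h
    · exact absurd h (hlampos l hl).ne'
    · exact h
  have hcomp : ∀ i j : Fin n, ∑ l, φ l i * φ l j = if i = j then (1:ℝ) else 0 := by
    intro i j
    have h := congrFun (congrFun hΦ2 i) j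
    rw [Matrix.mul_apply] at h
    simpa [hΦ, Matrix.one_apply] using h
  have hψφ : ∀ i, ψ i = c 0 * φ 0 i := by
    intro i
    calc ψ i = ∑ j, ψ j * (if i = j then (1:ℝ) else 0) := by simp
    _ = ∑ j, ψ j * ∑ l, φ l i * φ l j := by
        exact Finset.sum_congr rfl fun j _ => by rw [hcomp i j]
    _ = ∑ l, (∑ j, φ l j * ψ j) * φ l i := by
        simp_rw [Finset.mul_sum, Finset.sum_mul]
        rw [Finset.sum_comm]
        exact Finset.sum_congr rfl fun j _ => Finset.sum_congr rfl fun l _ => by ring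
    _ = ∑ l, c l * φ l i := rfl
    _ = c 0 * φ 0 i := by
        refine Finset.sum_eq_single 0 (fun l _ hl => by rw [hc0 l hl, zero_mul]) ?_
        intro h
        exact absurd (Finset.mem_univ 0) h
  have hc0sq : c 0 * c 0 = 1 := by
    have h1 : ∑ i, ψ i * ψ i = (c 0 * c 0) * ∑ i, φ 0 i * φ 0 i := by
      rw [Finset.mul_sum]
      exact Finset.sum_congr rfl fun i _ => by rw [hψφ i]; ring
    rw [hψnorm, horth 0 0] at h1
    simpa using h1.symm
  set P : Matrix (Fin n) (Fin n) ℝ := Matrix.of (fun i j => ψ i * ψ j) with hP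
  set E₀ : Matrix (Fin n) (Fin n) ℝ :=
    Matrix.diagonal (fun l => if l = 0 then (1:ℝ) else 0) with hE₀
  have hPdecomp : P = Φᵀ * E₀ * Φ := by
    ext i j
    rw [Matrix.mul_apply]
    have h1 : ∀ l, (Φᵀ * E₀) i l * Φ l j = (if l = 0 then φ 0 i * φ 0 j else 0) := by
      intro l
      rw [hE₀, Matrix.mul_diagonal]
      by_cases h : l = 0 <;> simp [hΦ, h, Matrix.transpose_apply]
    rw [Finset.sum_congr rfl fun l _ => h1 l, Finset.sum_ite_eq' Finset.univ 0]
    simp only [Finset.mem_univ, if_true]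
    show ψ i * ψ j = φ 0 i * φ 0 j
    rw [hψφ i, hψφ j]
    calc c 0 * φ 0 i * (c 0 * φ 0 j) = (c 0 * c 0) * (φ 0 i * φ 0 j) := by ring
    _ = φ 0 i * φ 0 j := by rw [hc0sq, one_mul]
  -- Green's function transformed
  set Gt : Matrix (Fin n) (Fin n) ℝ := S * 𝔾 * Sinv with hGt
  have hDinv : Sinv * Sinv = Matrix.diagonal (fun i => (d i)⁻¹) := by
    have h1 : (fun i => (sq i)⁻¹ * (sq i)⁻¹) = fun i => (d i)⁻¹ := by
      funext i
      rw [← hsqsq i, mul_inv]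
    rw [hSinv, Matrix.diagonal_mul_diagonal, h1]
  have hfact : Sinv * L * S = 1 - Matrix.diagonal (fun i => (d i)⁻¹) * A := by
    rw [hL, Matrix.mul_sub, Matrix.mul_one, Matrix.sub_mul, hSS']
    congr 1
    calc Sinv * (Sinv * A * Sinv) * S = (Sinv * Sinv) * A * (Sinv * S) := by
          noncomm_ring
    _ = Matrix.diagonal (fun i => (d i)⁻¹) * A := by rw [hDinv, hSS', Matrix.mul_one]
  have hG1' : 𝔾 * (1 - Matrix.diagonal (fun i => (d i)⁻¹) * A)
      = 1 - Matrix.of (fun x y : Fin n => d y / vol) := by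
    ext x y
    rw [hG1 x y]
    simp [Matrix.one_apply, Matrix.sub_apply, hd]
  have hGtL : Gt * L = 1 - P := by
    have h1 : Gt * L = S * (𝔾 * (Sinv * L * S)) * Sinv := by
      have h2 : S * (𝔾 * (Sinv * L * S)) * Sinv = S * 𝔾 * Sinv * L * (S * Sinv) := by
        noncomm_ring
      rw [h2, hSS, Matrix.mul_one, hGt]
    rw [h1, hfact, hG1', Matrix.mul_sub, Matrix.sub_mul, Matrix.mul_one, hSS]
    congr 1
    ext i j
    rw [hS, hSinv, Matrix.mul_diagonal, Matrix.diagonal_mul]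
    show sq i * (d j / vol) * (sq j)⁻¹ = ψ i * ψ j
    rw [hψ, div_mul_div_comm, Real.mul_self_sqrt hvolpos.le, ← hsqsq j]
    field_simp [(hsqpos j).ne']
  have hGtP : Gt * P = 0 := by
    ext i j
    rw [Matrix.mul_apply]
    have h1 : ∀ k, Gt i k * P k j = (sq i * (Real.sqrt vol)⁻¹ * ψ j) * 𝔾 i k := by
      intro k
      have h2 : Gt i k = sq i * 𝔾 i k * (sq k)⁻¹ := by
        rw [hGt, hS, hSinv, Matrix.mul_diagonal, Matrix.diagonal_mul]
      rw [h2]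
      show sq i * 𝔾 i k * (sq k)⁻¹ * (ψ k * ψ j) = _
      rw [hψ]
      field_simp [(hsqpos k).ne', (Real.sqrt_pos.mpr hvolpos).ne']
    rw [Finset.sum_congr rfl fun k _ => h1 k, ← Finset.mul_sum, hG2 i, mul_zero]
    rfl
  set μ : Fin n → ℝ := fun l => lam l + (if l = 0 then 1 else 0) with hμ
  have hμpos : ∀ l, 0 < μ l := by
    intro l
    by_cases h : l = 0
    · simp [hμ, h, hlam0]
    · simp only [hμ, h, if_false, add_zero]
      exact hlampos l h
  set Q : Matrix (Fin n) (Fin n) ℝ :=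
    Φᵀ * Matrix.diagonal (fun l => (μ l)⁻¹) * Φ with hQ
  have hNQ : (L + P) * Q = 1 := by
    have hsum : L + P = Φᵀ * Matrix.diagonal μ * Φ := by
      rw [hLdecomp, hPdecomp, ← Matrix.add_mul, ← Matrix.mul_add, hE₀,
        Matrix.diagonal_add]
    rw [hsum, hQ]
    have hmm : Matrix.diagonal μ * Matrix.diagonal (fun l => (μ l)⁻¹) = 1 := by
      rw [Matrix.diagonal_mul_diagonal]
      convert Matrix.diagonal_one
      exact mul_inv_cancel₀ (hμpos _).ne'
    calc Φᵀ * Matrix.diagonal μ * Φ * (Φᵀ * Matrix.diagonal (fun l => (μ l)⁻¹) * Φ)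
        = Φᵀ * (Matrix.diagonal μ * (Φ * Φᵀ) * Matrix.diagonal (fun l => (μ l)⁻¹)) * Φ := by
          noncomm_ring
    _ = 1 := by rw [hΦ1, Matrix.mul_one, hmm, Matrix.mul_one, hΦ2]
  set ν : Fin n → ℝ := fun l => if l = 0 then 0 else (lam l)⁻¹ with hν
  have hGtdecomp : Gt = Φᵀ * Matrix.diagonal ν * Φ := by
    have h1 : Gt = (1 - P) * Q := by
      calc Gt = Gt * ((L + P) * Q) := by rw [hNQ, Matrix.mul_one]
      _ = (Gt * L + Gt * P) * Q := by noncomm_ring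
      _ = (1 - P) * Q := by rw [hGtL, hGtP, add_zero]
    have h2 : (1 : Matrix (Fin n) (Fin n) ℝ) - P = Φᵀ * (1 - E₀) * Φ := by
      rw [Matrix.mul_sub, Matrix.sub_mul, Matrix.mul_one, hΦ2, hPdecomp]
    have h3 : ((1 : Matrix (Fin n) (Fin n) ℝ) - E₀) * Matrix.diagonal (fun l => (μ l)⁻¹)
        = Matrix.diagonal ν := by
      have h4 : (1 : Matrix (Fin n) (Fin n) ℝ) - E₀
          = Matrix.diagonal (fun l => 1 - (if l = 0 then (1:ℝ) else 0)) := by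
        rw [hE₀, ← Matrix.diagonal_one, Matrix.diagonal_sub]
      have h5 : (fun l => (1 - if l = 0 then (1:ℝ) else 0) * (μ l)⁻¹) = ν := by
        funext l
        by_cases h : l = 0 <;> simp [hν, hμ, h]
      rw [h4, Matrix.diagonal_mul_diagonal, h5]
    rw [h1, h2, hQ]
    calc Φᵀ * (1 - E₀) * Φ * (Φᵀ * Matrix.diagonal (fun l => (μ l)⁻¹) * Φ)
        = Φᵀ * ((1 - E₀) * (Φ * Φᵀ) * Matrix.diagonal (fun l => (μ l)⁻¹)) * Φ := by
          noncomm_ring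
    _ = Φᵀ * Matrix.diagonal ν * Φ := by rw [hΦ1, Matrix.mul_one, h3]
  have h𝔾 : 𝔾 = Sinv * (Φᵀ * (Matrix.diagonal ν * (Φ * S))) := by
    have h1 : 𝔾 = Sinv * Gt * S := by
      calc 𝔾 = 1 * 𝔾 * 1 := by rw [Matrix.one_mul, Matrix.mul_one]
      _ = (Sinv * S) * 𝔾 * (Sinv * S) := by rw [hSS']
      _ = Sinv * (S * 𝔾 * Sinv) * S := by noncomm_ring
      _ = Sinv * Gt * S := by rw [hGt]
    rw [h1, hGtdecomp]
    noncomm_ring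
  -- norms
  set Δℝ : ℝ := (Finset.univ.sup' Finset.univ_nonempty (fun i => G.degree i) : ℝ) with hΔ
  set δℝ : ℝ := (Finset.univ.inf' Finset.univ_nonempty (fun i => G.degree i) : ℝ) with hδ
  have hδpos : 0 < δℝ := by
    rw [hδ]
    have h1 : 0 < Finset.univ.inf' Finset.univ_nonempty (fun i => G.degree i) := by
      rw [Finset.lt_inf'_iff]
      exact fun i _ => hdeg i
    exact_mod_cast h1
  have hdle : ∀ i, d i ≤ Δℝ := by
    intro i
    simp only [hd, hΔ]
    exact_mod_cast Finset.le_sup' (fun i => G.degree i) (Finset.mem_univ i)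
  have hdge : ∀ i, δℝ ≤ d i := by
    intro i
    simp only [hd, hδ]
    exact_mod_cast Finset.inf'_le (fun i => G.degree i) (Finset.mem_univ i)
  have hΔpos : 0 < Δℝ := lt_of_lt_of_le (hdpos 0) (hdle 0)
  -- norm bounds
  have nSinv : ‖Sinv‖ ≤ (Real.sqrt δℝ)⁻¹ := by
    rw [hSinv]
    apply diagNormLe _ _ (inv_nonneg.mpr (Real.sqrt_nonneg _))
    intro i
    rw [abs_of_pos (inv_pos.mpr (hsqpos i))]
    exact inv_anti₀ (Real.sqrt_pos.mpr hδpos) (Real.sqrt_le_sqrt (hdge i))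
  have nS : ‖S‖ ≤ Real.sqrt Δℝ := by
    rw [hS]
    apply diagNormLe _ _ (Real.sqrt_nonneg _)
    intro i
    rw [abs_of_pos (hsqpos i)]
    exact Real.sqrt_le_sqrt (hdle i)
  have nν : ‖Matrix.diagonal ν‖ ≤ (lam 1)⁻¹ := by
    apply diagNormLe _ _ (inv_nonneg.mpr hlam1.le)
    intro l
    by_cases h : l = 0
    · simp [hν, h, inv_nonneg.mpr hlam1.le]
    · rw [hν]
      simp only [h, if_false]
      rw [abs_of_pos (inv_pos.mpr (hlampos l h))]
      exact inv_anti₀ hlam1 (hlamge l h)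
  have nΦ : ‖Φ‖ ≤ 1 := orthNormLe Φ hΦ2
  have nΦt : ‖Φᵀ‖ ≤ 1 := by
    have h1 : Φᵀ = Φᴴ := rfl
    rw [h1, Matrix.l2_opNorm_conjTranspose]
    exact nΦ
  rw [← Matrix.cstar_norm_def, h𝔾]
  calc ‖Sinv * (Φᵀ * (Matrix.diagonal ν * (Φ * S)))‖
      ≤ ‖Sinv‖ * (‖Φᵀ‖ * (‖Matrix.diagonal ν‖ * (‖Φ‖ * ‖S‖))) := by
        refine le_trans (Matrix.l2_opNorm_mul _ _) ?_
        refine mul_le_mul_of_nonneg_left ?_ (norm_nonneg _)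
        refine le_trans (Matrix.l2_opNorm_mul _ _) ?_
        refine mul_le_mul_of_nonneg_left ?_ (norm_nonneg _)
        refine le_trans (Matrix.l2_opNorm_mul _ _) ?_
        refine mul_le_mul_of_nonneg_left ?_ (norm_nonneg _)
        exact Matrix.l2_opNorm_mul _ _
  _ ≤ (Real.sqrt δℝ)⁻¹ * (1 * ((lam 1)⁻¹ * (1 * Real.sqrt Δℝ))) := by
        gcongr <;> first
          | exact norm_nonneg _
          | assumption
          | positivity
  _ = (1 / lam 1) * Real.sqrt (Δℝ / δℝ) := by
        rw [Real.sqrt_div hΔpos.le]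
        ring
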